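/- Let H and V be Hermitian d×d complex matrices, let β ∈ ℝ, and for s ∈ [0,1] set H(s) := H − (1−s)V. Then for every d×d complex matrix A, Tr(A · g[H−V](β)) − Tr(A · g[H](β)) = β · ∫₀¹ ∫₀¹ cov^τ_{H(s),β}(A, V) dτ ds, where g[K](β) := e^{−βK}/Tr(e^{−βK}) and cov^τ_{K,β}(A,B) := Tr( e^{−τβK} A e^{−(1−τ)βK} B ) / Tr(e^{−βK}) − Tr(g[K](β) A) · Tr(g[K](β) B). -/

import Mathlib

open Matrix Complex NormedSpace intervalIntegral

/-- `e^{-b K}` for a matrix `K` and a real parameter `b`. -/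
noncomputable def mexp {d : ℕ} (K : Matrix (Fin d) (Fin d) ℂ) (b : ℝ) :
    Matrix (Fin d) (Fin d) ℂ :=
  NormedSpace.exp ((-(b : ℂ)) • K)

/-- The Gibbs state `g[K](β) = e^{-βK} / Tr e^{-βK}`. -/
noncomputable def gibbs {d : ℕ} (K : Matrix (Fin d) (Fin d) ℂ) (β : ℝ) :
    Matrix (Fin d) (Fin d) ℂ :=
  ((mexp K β).trace)⁻¹ • mexp K β

/-- The generalised covariance
`cov^τ_{K,β}(A,B) = Tr(e^{-τβK} A e^{-(1-τ)βK} B)/Tr(e^{-βK}) - Tr(g A) Tr(g B)`. -/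
noncomputable def gcov {d : ℕ} (K : Matrix (Fin d) (Fin d) ℂ) (β τ : ℝ)
    (A B : Matrix (Fin d) (Fin d) ℂ) : ℂ :=
  (mexp K (τ * β) * A * mexp K ((1 - τ) * β) * B).trace / (mexp K β).trace
    - (gibbs K β * A).trace * (gibbs K β * B).trace

attribute [local instance] Matrix.linftyOpNormedRing Matrix.linftyOpNormedAlgebra

namespace TruncAux

variable {d : ℕ}

local notation "Mat" => Matrix (Fin d) (Fin d) ℂ

lemma rsmul_eq (r : ℝ) (M : Mat) : r • M = (r : ℂ) • M := by
  rw [← smul_one_smul ℂ r M, Complex.real_smul, mul_one]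

lemma hasDerivAt_exp_rsmul (B : Mat) (t : ℝ) :
    HasDerivAt (fun u : ℝ => NormedSpace.exp (u • B)) (NormedSpace.exp (t • B) * B) t := by
  exact hasDerivAt_exp_smul_const B t

/-- trace is a continuous linear map -/
noncomputable def traceCLM : Mat →L[ℂ] ℂ :=
  LinearMap.toContinuousLinearMap (Matrix.traceLinearMap (Fin d) ℂ ℂ)

lemma commute_exp_rsmul (B : Mat) (u : ℝ) : NormedSpace.exp (u • B) * B = B * NormedSpace.exp (u • B) :=
  (((Commute.refl B).smul_left u).exp_left).eq

lemma exp_merge (N : Mat) (τ : ℝ) :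
    NormedSpace.exp ((1 - τ) • N) * NormedSpace.exp (τ • N) = NormedSpace.exp N := by
  rw [← Matrix.exp_add_of_commute _ _ (((Commute.refl N).smul_left (1-τ)).smul_right τ),
    ← add_smul]
  norm_num

/-- Duhamel difference formula, traced against a fixed matrix `C`. -/
lemma trace_exp_sub (C P Q : Mat) :
    (C * NormedSpace.exp P).trace - (C * NormedSpace.exp Q).trace
      = ∫ τ in (0:ℝ)..1, (C * NormedSpace.exp (τ • P) * (P - Q) * NormedSpace.exp ((1-τ) • Q)).trace := by
  have key : ∀ τ : ℝ, HasDerivAt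
      (fun τ : ℝ => (C * NormedSpace.exp (τ • P) * NormedSpace.exp ((1-τ) • Q)).trace)
      ((C * NormedSpace.exp (τ • P) * (P - Q) * NormedSpace.exp ((1-τ) • Q)).trace) τ := by
    intro τ
    have h1 : HasDerivAt (fun τ : ℝ => NormedSpace.exp (τ • P)) (NormedSpace.exp (τ • P) * P) τ :=
      hasDerivAt_exp_rsmul P τ
    have h2 : HasDerivAt (fun τ : ℝ => NormedSpace.exp ((1-τ) • Q))
        (-(NormedSpace.exp ((1-τ) • Q) * Q)) τ := by
      have hin : HasDerivAt (fun τ : ℝ => 1 - τ) (-1) τ := by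
        simpa using (hasDerivAt_id τ).const_sub (1:ℝ)
      have := (hasDerivAt_exp_rsmul Q (1-τ)).scomp τ hin
      simp only [Function.comp_def, neg_smul, one_smul] at this; exact this
    have hm : HasDerivAt (fun τ : ℝ => C * NormedSpace.exp (τ • P) * NormedSpace.exp ((1-τ) • Q))
        (C * NormedSpace.exp (τ • P) * (P - Q) * NormedSpace.exp ((1-τ) • Q)) τ := by
      have := ((h1.const_mul C).mul h2)
      refine HasDerivAt.congr_deriv this ?_
      rw [commute_exp_rsmul Q (1-τ)]
      noncomm_ring
    have := ((traceCLM (d := d)).restrictScalars ℝ).hasFDerivAt.comp_hasDerivAt τ hm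
    simp only [Function.comp_def] at this; exact this
  have hFTC := intervalIntegral.integral_eq_sub_of_hasDerivAt (a := (0:ℝ)) (b := 1)
    (f := fun τ : ℝ => (C * NormedSpace.exp (τ • P) * NormedSpace.exp ((1-τ) • Q)).trace)
    (fun τ _ => key τ) ?_
  · simpa using hFTC.symm
  · apply Continuous.intervalIntegrable
    have c1 : Continuous fun τ : ℝ => NormedSpace.exp (τ • P) :=
      exp_continuous.comp (continuous_id.smul continuous_const)
    have c2 : Continuous fun τ : ℝ => NormedSpace.exp ((1 - τ) • Q) :=
      exp_continuous.comp ((continuous_const.sub continuous_id).smul continuous_const)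
    exact (((continuous_const.matrix_mul c1).matrix_mul continuous_const).matrix_mul
      c2).matrix_trace

lemma hasDerivAt_trace_exp_line (X W C : Mat) (s₀ : ℝ) :
    HasDerivAt (fun s : ℝ => (C * NormedSpace.exp (X + s • W)).trace)
      (∫ τ in (0:ℝ)..1,
        (C * NormedSpace.exp (τ • (X + s₀ • W)) * W * NormedSpace.exp ((1-τ) • (X + s₀ • W))).trace) s₀ := by
  set N : ℝ → Mat := fun s => X + s • W with hN
  set Φ : ℝ → ℂ := fun s =>
    ∫ τ in (0:ℝ)..1, (C * NormedSpace.exp (τ • N s) * W * NormedSpace.exp ((1-τ) • N s₀)).trace with hΦ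
  have hdiff : ∀ s : ℝ,
      (C * NormedSpace.exp (N s)).trace - (C * NormedSpace.exp (N s₀)).trace = (s - s₀) * Φ s := by
    intro s
    rw [trace_exp_sub C (N s) (N s₀)]
    have hsub : N s - N s₀ = (s - s₀) • W := by
      simp only [hN, sub_smul]; abel
    have hpt : ∀ τ : ℝ,
        (C * NormedSpace.exp (τ • N s) * ((s - s₀) • W) * NormedSpace.exp ((1-τ) • N s₀)).trace
          = (s - s₀) * (C * NormedSpace.exp (τ • N s) * W * NormedSpace.exp ((1-τ) • N s₀)).trace := by
      intro τ
      rw [mul_smul_comm, smul_mul_assoc, trace_smul, Complex.real_smul]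
      push_cast
      ring
    rw [hsub]
    simp_rw [hpt]
    rw [intervalIntegral.integral_const_mul]
  have hΦcont : ContinuousAt Φ s₀ := by
    apply Continuous.continuousAt
    apply intervalIntegral.continuous_parametric_intervalIntegral_of_continuous'
      (f := fun s τ => (C * NormedSpace.exp (τ • N s) * W * NormedSpace.exp ((1-τ) • N s₀)).trace) ?_ 0 1
    have c1 : Continuous fun p : ℝ × ℝ => NormedSpace.exp (p.2 • N p.1) :=
      exp_continuous.comp (continuous_snd.smul
        (continuous_const.add (continuous_fst.smul continuous_const)))
    have c2 : Continuous fun p : ℝ × ℝ => NormedSpace.exp ((1 - p.2) • N s₀) :=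
      exp_continuous.comp ((continuous_const.sub continuous_snd).smul continuous_const)
    exact (((continuous_const.matrix_mul c1).matrix_mul continuous_const).matrix_mul
      c2).matrix_trace
  rw [hasDerivAt_iff_tendsto_slope]
  have h1 : Filter.Tendsto Φ (nhdsWithin s₀ {s₀}ᶜ) (nhds (Φ s₀)) :=
    hΦcont.tendsto.mono_left nhdsWithin_le_nhds
  refine h1.congr' ?_
  filter_upwards [self_mem_nhdsWithin] with s hs
  have hs' : s - s₀ ≠ 0 := sub_ne_zero.mpr hs
  rw [slope_def_module]
  rw [hdiff s, ← Complex.coe_smul, smul_eq_mul]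
  push_cast
  have hc : (s:ℂ) - s₀ ≠ 0 := by exact_mod_cast hs'
  field_simp

lemma trace_exp_pos (hd : 0 < d) {K : Mat} (hK : K.IsHermitian) :
    ∃ r : ℝ, 0 < r ∧ (NormedSpace.exp K).trace = (r : ℂ) := by
  set u : Mat := (hK.eigenvectorUnitary : Mat) with hu
  have hstar : star u * u = 1 := Matrix.UnitaryGroup.star_mul_self _
  have hUnit : IsUnit u := by
    apply (Matrix.isUnit_iff_isUnit_det _).mpr
    exact Matrix.UnitaryGroup.det_isUnit hK.eigenvectorUnitary
  have hinv : u⁻¹ = star u := Matrix.inv_eq_left_inv hstar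
  have h1 : NormedSpace.exp K = u * NormedSpace.exp (diagonal (RCLike.ofReal ∘ hK.eigenvalues)) * star u := by
    conv_lhs => rw [hK.spectral_theorem]
    rw [Unitary.conjStarAlgAut_apply, ← hu, ← hinv, Matrix.exp_conj _ _ hUnit]
  refine ⟨∑ i, Real.exp (hK.eigenvalues i), ?_, ?_⟩
  · apply Finset.sum_pos (fun i _ => Real.exp_pos _)
    simpa [Finset.univ_nonempty_iff] using Fin.pos_iff_nonempty.mp hd
  · rw [h1, Matrix.trace_mul_cycle, hstar, one_mul,
      Matrix.exp_diagonal, Matrix.trace_diagonal]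
    push_cast
    apply Finset.sum_congr rfl
    intro i _
    rw [Pi.coe_exp, Function.comp_apply, ← Complex.exp_eq_exp_ℂ, RCLike.ofReal_alg]
    rw [← Complex.ofReal_exp]
    push_cast
    simp [Complex.exp_ofReal_re]

lemma hasDerivAt_inv_comp {Z : ℝ → ℂ} {Z' : ℂ} {x : ℝ} (h : HasDerivAt Z Z' x)
    (hx : Z x ≠ 0) : HasDerivAt (fun s => (Z s)⁻¹) (-Z' / Z x ^ 2) x := by
  have h1 := ((hasDerivAt_inv hx).hasFDerivAt.restrictScalars ℝ).comp_hasDerivAt x h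
  have : HasDerivAt (fun s => (Z s)⁻¹) (Z' • -(Z x ^ 2)⁻¹) x := by simpa [Function.comp_def] using h1
  convert this using 1
  simp [smul_eq_mul]
  ring

lemma herm_csmul (r : ℝ) {M : Mat} (hM : M.IsHermitian) : ((r:ℂ) • M).IsHermitian := by
  unfold Matrix.IsHermitian
  rw [Matrix.conjTranspose_smul, hM.eq, Complex.star_def, Complex.conj_ofReal]

lemma mexp_eq (H V : Mat) (β s r : ℝ) :
    mexp (H - ((1 - s : ℝ) : ℂ) • V) (r * β)
      = NormedSpace.exp (r • ((-(β:ℂ)) • (H - V) + s • ((-(β:ℂ)) • V))) := by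
  rw [mexp]
  congr 1
  rw [rsmul_eq r, rsmul_eq s]
  push_cast
  module

lemma Ns_herm {H V : Mat} (hH : H.IsHermitian) (hV : V.IsHermitian) (β s : ℝ) :
    ((-(β:ℂ)) • (H - V) + s • ((-(β:ℂ)) • V)).IsHermitian := by
  have heq : (-(β:ℂ)) • (H - V) + s • ((-(β:ℂ)) • V)
      = (((-β : ℝ)) : ℂ) • (H - ((1 - s : ℝ) : ℂ) • V) := by
    rw [rsmul_eq s]
    push_cast
    module
  rw [heq]
  exact herm_csmul (-β) (hH.sub (herm_csmul (1-s) hV))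


lemma gcov_eq (H V A : Mat) (β s τ : ℝ) :
    gcov (H - ((1 - s : ℝ) : ℂ) • V) β τ A V
      = (NormedSpace.exp (τ • ((-(β:ℂ)) • (H - V) + s • ((-(β:ℂ)) • V))) * A
          * NormedSpace.exp ((1-τ) • ((-(β:ℂ)) • (H - V) + s • ((-(β:ℂ)) • V))) * V).trace
          * ((NormedSpace.exp ((-(β:ℂ)) • (H - V) + s • ((-(β:ℂ)) • V))).trace)⁻¹
        - (((NormedSpace.exp ((-(β:ℂ)) • (H - V) + s • ((-(β:ℂ)) • V))).trace)⁻¹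
            * (A * NormedSpace.exp ((-(β:ℂ)) • (H - V) + s • ((-(β:ℂ)) • V))).trace)
          * (((NormedSpace.exp ((-(β:ℂ)) • (H - V) + s • ((-(β:ℂ)) • V))).trace)⁻¹
            * (V * NormedSpace.exp ((-(β:ℂ)) • (H - V) + s • ((-(β:ℂ)) • V))).trace) := by
  have h1 : mexp (H - ((1 - s : ℝ) : ℂ) • V) β
      = NormedSpace.exp ((-(β:ℂ)) • (H - V) + s • ((-(β:ℂ)) • V)) := by
    have := mexp_eq H V β s 1
    rw [one_mul, one_smul] at this
    exact this
  rw [gcov, mexp_eq H V β s τ, mexp_eq H V β s (1-τ), h1, gibbs, h1]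
  rw [Matrix.smul_mul, Matrix.smul_mul, Matrix.trace_smul, Matrix.trace_smul]
  rw [div_eq_mul_inv, smul_eq_mul, smul_eq_mul]
  congr 3
  · exact Matrix.trace_mul_comm _ _
  · exact Matrix.trace_mul_comm _ _

lemma main_hasDerivAt (H V : Mat) (hH : H.IsHermitian) (hV : V.IsHermitian) (β : ℝ) (A : Mat)
    (hd : 0 < d) (s₀ : ℝ) :
    HasDerivAt (fun s : ℝ => (A * gibbs (H - ((1 - s : ℝ) : ℂ) • V) β).trace)
      (-(β:ℂ) * ∫ τ in (0:ℝ)..1, gcov (H - ((1 - s₀ : ℝ) : ℂ) • V) β τ A V) s₀ := by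
  set X : Mat := (-(β:ℂ)) • (H - V) with hX
  set W : Mat := (-(β:ℂ)) • V with hW
  have hN1 : ∀ s : ℝ, mexp (H - ((1 - s : ℝ) : ℂ) • V) β = NormedSpace.exp (X + s • W) := by
    intro s
    have := mexp_eq H V β s 1
    rw [one_mul, one_smul] at this
    exact this
  have hZ : ∀ s : ℝ, (NormedSpace.exp (X + s • W)).trace ≠ 0 := by
    intro s
    obtain ⟨r, hr, heq⟩ := trace_exp_pos hd (Ns_herm hH hV β s)
    rw [heq]
    exact_mod_cast hr.ne'
  have hTA := hasDerivAt_trace_exp_line X W A s₀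
  have hZd := hasDerivAt_trace_exp_line X W 1 s₀
  simp only [one_mul] at hZd
  have hZinv := hasDerivAt_inv_comp hZd (hZ s₀)
  have hf := hTA.mul hZinv
  have hgoalfun : (fun s : ℝ => (A * gibbs (H - ((1 - s : ℝ) : ℂ) • V) β).trace)
      = fun s => (A * NormedSpace.exp (X + s • W)).trace * ((NormedSpace.exp (X + s • W)).trace)⁻¹ := by
    funext s
    rw [gibbs, hN1 s, Matrix.mul_smul, Matrix.trace_smul, smul_eq_mul, mul_comm]
  rw [hgoalfun]
  refine HasDerivAt.congr_deriv hf ?_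
  -- now: value identification
  set N₀ : Mat := X + s₀ • W with hN₀
  set Z : ℂ := (NormedSpace.exp N₀).trace with hZ₀
  -- (d) IA = -β * J'
  have hIA : (∫ τ in (0:ℝ)..1, (A * NormedSpace.exp (τ • N₀) * W * NormedSpace.exp ((1-τ) • N₀)).trace)
      = -(β:ℂ) * ∫ τ in (0:ℝ)..1, (A * NormedSpace.exp (τ • N₀) * V * NormedSpace.exp ((1-τ) • N₀)).trace := by
    rw [← intervalIntegral.integral_const_mul]
    apply intervalIntegral.integral_congr
    intro τ _
    simp only [hW, mul_smul_comm, smul_mul_assoc, trace_smul, smul_eq_mul]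
  -- (e) IZ = -β * Tr(V exp N₀)
  have hIZ : (∫ τ in (0:ℝ)..1, (NormedSpace.exp (τ • N₀) * W * NormedSpace.exp ((1-τ) • N₀)).trace)
      = -(β:ℂ) * (V * NormedSpace.exp N₀).trace := by
    have hpt : ∀ τ : ℝ, (NormedSpace.exp (τ • N₀) * W * NormedSpace.exp ((1-τ) • N₀)).trace
        = -(β:ℂ) * (V * NormedSpace.exp N₀).trace := by
      intro τ
      simp only [hW, mul_smul_comm, smul_mul_assoc, trace_smul, smul_eq_mul]
      congr 1
      rw [Matrix.trace_mul_cycle, Matrix.trace_mul_cycle, Matrix.mul_assoc,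
        exp_merge N₀ τ]
    simp_rw [hpt]
    simp
  rw [hIA, hIZ]
  -- rewrite the gcov integral
  have ce1 : Continuous fun τ : ℝ => NormedSpace.exp (τ • N₀) :=
    exp_continuous.comp (continuous_id.smul continuous_const)
  have ce2 : Continuous fun τ : ℝ => NormedSpace.exp ((1-τ) • N₀) :=
    exp_continuous.comp ((continuous_const.sub continuous_id).smul continuous_const)
  have hnumc : Continuous fun τ : ℝ =>
      (NormedSpace.exp (τ • N₀) * A * NormedSpace.exp ((1-τ) • N₀) * V).trace * Z⁻¹ :=
    ((((ce1.matrix_mul continuous_const).matrix_mul ce2).matrix_mul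
      continuous_const).matrix_trace).mul continuous_const
  have hgsplit : (∫ τ in (0:ℝ)..1, gcov (H - ((1 - s₀ : ℝ) : ℂ) • V) β τ A V)
      = (∫ τ in (0:ℝ)..1, (NormedSpace.exp (τ • N₀) * A * NormedSpace.exp ((1-τ) • N₀) * V).trace) * Z⁻¹
        - (Z⁻¹ * (A * NormedSpace.exp N₀).trace) * (Z⁻¹ * (V * NormedSpace.exp N₀).trace) := by
    rw [show (∫ τ in (0:ℝ)..1, gcov (H - ((1 - s₀ : ℝ) : ℂ) • V) β τ A V)
        = ∫ τ in (0:ℝ)..1,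
            ((NormedSpace.exp (τ • N₀) * A * NormedSpace.exp ((1-τ) • N₀) * V).trace * Z⁻¹
              - (Z⁻¹ * (A * NormedSpace.exp N₀).trace) * (Z⁻¹ * (V * NormedSpace.exp N₀).trace)) from
      intervalIntegral.integral_congr (fun τ _ => gcov_eq H V A β s₀ τ)]
    rw [intervalIntegral.integral_sub (hnumc.intervalIntegrable 0 1)
      (intervalIntegrable_const), intervalIntegral.integral_mul_const,
      intervalIntegral.integral_const]
    simp
  -- flip the integrand
  have hflip : (∫ τ in (0:ℝ)..1, (NormedSpace.exp (τ • N₀) * A * NormedSpace.exp ((1-τ) • N₀) * V).trace)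
      = ∫ τ in (0:ℝ)..1, (A * NormedSpace.exp (τ • N₀) * V * NormedSpace.exp ((1-τ) • N₀)).trace := by
    have hnum : ∀ τ : ℝ, (NormedSpace.exp (τ • N₀) * A * NormedSpace.exp ((1-τ) • N₀) * V).trace
        = (fun u : ℝ => (A * NormedSpace.exp (u • N₀) * V * NormedSpace.exp ((1-u) • N₀)).trace) (1 - τ) := by
      intro τ
      simp only [sub_sub_cancel]
      have hassoc : NormedSpace.exp (τ • N₀) * A * NormedSpace.exp ((1-τ) • N₀) * V
          = NormedSpace.exp (τ • N₀) * (A * NormedSpace.exp ((1-τ) • N₀) * V) := by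
        simp only [Matrix.mul_assoc]
      rw [hassoc, Matrix.trace_mul_comm]
    simp_rw [hnum]
    rw [intervalIntegral.integral_comp_sub_left
      (fun u : ℝ => (A * NormedSpace.exp (u • N₀) * V * NormedSpace.exp ((1-u) • N₀)).trace) 1]
    norm_num
  rw [hgsplit, hflip]
  have hZne : Z ≠ 0 := hZ s₀
  field_simp
  ring

lemma cont_gcov_integral (H V A : Mat) (β : ℝ) (hH : H.IsHermitian) (hV : V.IsHermitian)
    (hd : 0 < d) :
    Continuous fun s : ℝ => ∫ τ in (0:ℝ)..1, gcov (H - ((1 - s : ℝ) : ℂ) • V) β τ A V := by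
  set X : Mat := (-(β:ℂ)) • (H - V) with hX
  set W : Mat := (-(β:ℂ)) • V with hW
  have hZ : ∀ s : ℝ, (NormedSpace.exp (X + s • W)).trace ≠ 0 := by
    intro s
    obtain ⟨r, hr, heq⟩ := trace_exp_pos hd (Ns_herm hH hV β s)
    rw [heq]
    exact_mod_cast hr.ne'
  have heq : (fun s : ℝ => ∫ τ in (0:ℝ)..1, gcov (H - ((1 - s : ℝ) : ℂ) • V) β τ A V)
      = fun s : ℝ => ∫ τ in (0:ℝ)..1,
          ((NormedSpace.exp (τ • (X + s • W)) * A * NormedSpace.exp ((1-τ) • (X + s • W)) * V).trace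
              * ((NormedSpace.exp (X + s • W)).trace)⁻¹
            - (((NormedSpace.exp (X + s • W)).trace)⁻¹ * (A * NormedSpace.exp (X + s • W)).trace)
              * (((NormedSpace.exp (X + s • W)).trace)⁻¹ * (V * NormedSpace.exp (X + s • W)).trace)) :=
    funext fun s => intervalIntegral.integral_congr (fun τ _ => gcov_eq H V A β s τ)
  rw [heq]
  apply intervalIntegral.continuous_parametric_intervalIntegral_of_continuous' ?_ 0 1
  have cNp : Continuous fun p : ℝ × ℝ => X + p.1 • W :=
    continuous_const.add (continuous_fst.smul continuous_const)
  have ce1 : Continuous fun p : ℝ × ℝ => NormedSpace.exp (p.2 • (X + p.1 • W)) :=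
    exp_continuous.comp (continuous_snd.smul cNp)
  have ce2 : Continuous fun p : ℝ × ℝ => NormedSpace.exp ((1 - p.2) • (X + p.1 • W)) :=
    exp_continuous.comp ((continuous_const.sub continuous_snd).smul cNp)
  have ceN : Continuous fun p : ℝ × ℝ => NormedSpace.exp (X + p.1 • W) := exp_continuous.comp cNp
  have cZpi : Continuous fun p : ℝ × ℝ => ((NormedSpace.exp (X + p.1 • W)).trace)⁻¹ :=
    (ceN.matrix_trace).inv₀ (fun p => hZ p.1)
  exact (((((ce1.matrix_mul continuous_const).matrix_mul ce2).matrix_mul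
      continuous_const).matrix_trace).mul cZpi).sub
    ((cZpi.mul ((continuous_const.matrix_mul ceN).matrix_trace)).mul
      (cZpi.mul ((continuous_const.matrix_mul ceN).matrix_trace)))

end TruncAux

/-- **Truncation formula.** For Hermitian `H`, `V` and `H(s) := H - (1-s)V`,
`Tr(A g[H-V](β)) - Tr(A g[H](β)) = β ∫₀¹∫₀¹ cov^τ_{H(s),β}(A, V) dτ ds`. -/
theorem truncation_formula {d : ℕ}
    (H V : Matrix (Fin d) (Fin d) ℂ) (hH : H.IsHermitian) (hV : V.IsHermitian)
    (β : ℝ) (A : Matrix (Fin d) (Fin d) ℂ) :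
    (A * gibbs (H - V) β).trace - (A * gibbs H β).trace
      = (β : ℂ) * ∫ s in (0:ℝ)..1, ∫ τ in (0:ℝ)..1, gcov (H - ((1 - s : ℝ) : ℂ) • V) β τ A V := by
  rcases Nat.eq_zero_or_pos d with rfl | hd
  · simp [gcov, Matrix.trace]
  · have hderiv := TruncAux.main_hasDerivAt H V hH hV β A hd
    have hcont := TruncAux.cont_gcov_integral H V A β hH hV hd
    have hFTC := intervalIntegral.integral_eq_sub_of_hasDerivAt (a := (0:ℝ)) (b := 1)
      (f := fun s : ℝ => (A * gibbs (H - ((1 - s : ℝ) : ℂ) • V) β).trace)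
      (f' := fun s : ℝ => -(β:ℂ) * ∫ τ in (0:ℝ)..1, gcov (H - ((1 - s:ℝ):ℂ) • V) β τ A V)
      (fun s _ => hderiv s) ((continuous_const.mul hcont).intervalIntegrable 0 1)
    rw [intervalIntegral.integral_const_mul] at hFTC
    norm_num at hFTC
    push_cast
    linear_combination hFTC
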